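/- Let F be a finite field of odd characteristic, d ≥ 2, and let p(x_1,...,x_{d-1}) = x_1^2 + ... + x_{d-1}^2 over R = M_2(F). Let V_{p,0} = {(X_1,...,X_d) ∈ R^d : X_d = p(X_1,...,X_{d-1})}. Then there exists a nontrivial additive character ψ of R^d such that (|R|^d / |V_{p,0}|^{1/2}) · |V̂_{p,0}(ψ)| ≥ |F|^{(d-1)/2}. Consequently, for any fixed C, V_{p,0} is C-Salem over M_2(F) for only finitely many finite fields F of odd characteristic. -/

import Mathlib

open Finset


private lemma ac_map_sum {A M : Type*} [AddCommMonoid A] [CommMonoid M]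
    (ψ : AddChar A M) {ι : Type*} (s : Finset ι) (f : ι → A) :
    ψ (∑ i ∈ s, f i) = ∏ i ∈ s, ψ (f i) := by
  classical
  induction s using Finset.induction_on with
  | empty => simp
  | insert a s h ih => simp [Finset.sum_insert h, Finset.prod_insert h,
      AddChar.map_add_eq_mul, ih]

private lemma sum_graph {α β γ : Type*} [Fintype α] [Fintype β] [DecidableEq β]
    [AddCommMonoid γ] (f : α → β) (g : α × β → γ) :
    ∑ x ∈ Finset.univ.filter (fun x : α × β => x.2 = f x.1), g x = ∑ a, g (a, f a) := by
  rw [Finset.sum_filter, Fintype.sum_prod_type]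
  simp [Finset.sum_ite_eq']

private lemma card_graph {α β : Type*} [Fintype α] [Fintype β] [DecidableEq β]
    (f : α → β) :
    (Finset.univ.filter (fun x : α × β => x.2 = f x.1)).card = Fintype.card α := by
  rw [Finset.card_eq_sum_ones, sum_graph f (fun _ => 1), Finset.sum_const, smul_eq_mul,
    mul_one, Fintype.card]

private lemma card_M (F : Type) [Field F] [Fintype F] [DecidableEq F] :
    Fintype.card (Matrix (Fin 2) (Fin 2) F) = Fintype.card F ^ 4 := by
  show Fintype.card (Fin 2 → Fin 2 → F) = _
  rw [Fintype.card_pi_const, Fintype.card_pi_const]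
  ring

private lemma T_norm (F : Type) [Field F] [Fintype F] [DecidableEq F]
    (hch : ringChar F ≠ 2) (ψ₁ : AddChar F ℂ) (hp : ψ₁.IsPrimitive) :
    ‖∑ a : F, ψ₁ (a + a * a)‖ = Real.sqrt (Fintype.card F) := by
  have h2 : (2 : F) ≠ 0 := Ring.two_ne_zero hch
  have hpos : 0 < ringChar F := (CharP.char_is_prime F (ringChar F)).pos
  set T := ∑ a : F, ψ₁ (a + a * a) with hT
  have hconj : ∀ x : F, (starRingEnd ℂ) (ψ₁ x) = ψ₁ (-x) := fun x => by
    rw [AddChar.starComp_apply hpos, AddChar.inv_apply]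
  have key : T * (starRingEnd ℂ) T = (Fintype.card F : ℂ) := by
    rw [hT, map_sum]
    simp_rw [hconj]
    rw [Finset.sum_mul_sum]
    have step1 : ∀ b a : F, ψ₁ (a + a * a) * ψ₁ (-(b + b * b))
        = ψ₁ ((a + a * a) + -(b + b * b)) := fun b a =>
      (AddChar.map_add_eq_mul ψ₁ _ _).symm
    calc ∑ a : F, ∑ b : F, ψ₁ (a + a * a) * ψ₁ (-(b + b * b))
        = ∑ b : F, ∑ a : F, ψ₁ ((a + a * a) + -(b + b * b)) := by
          rw [Finset.sum_comm]; simp_rw [step1]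
      _ = ∑ b : F, ∑ t : F, ψ₁ (t + t * t) * ψ₁ (b * (2 * t)) := by
          refine Finset.sum_congr rfl fun b _ => ?_
          rw [← Equiv.sum_comp (Equiv.addLeft b)]
          refine Finset.sum_congr rfl fun t _ => ?_
          rw [← AddChar.map_add_eq_mul]
          congr 1
          simp only [Equiv.coe_addLeft]
          ring
      _ = ∑ t : F, ψ₁ (t + t * t) * ∑ b : F, ψ₁ (b * (2 * t)) := by
          rw [Finset.sum_comm]; simp_rw [Finset.mul_sum]
      _ = (Fintype.card F : ℂ) := by
          have : ∀ t : F, (∑ b : F, ψ₁ (b * (2 * t)))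
              = if 2 * t = 0 then (Fintype.card F : ℂ) else 0 := fun t => by
            rw [AddChar.sum_mulShift _ hp]; split <;> simp
          simp_rw [this]
          rw [Finset.sum_eq_single 0]
          · simp
          · intro t _ ht
            rw [if_neg (by simp [h2, ht]), mul_zero]
          · simp
  have hnorm : ‖T‖ ^ 2 = (Fintype.card F : ℝ) := by
    have := key
    rw [Complex.mul_conj] at this
    have h2' : Complex.normSq T = (Fintype.card F : ℝ) := by exact_mod_cast this
    rw [← Complex.sq_norm] at h2'
    exact h2'
  rw [← hnorm, Real.sqrt_sq (norm_nonneg _)]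

private def matEquiv (F : Type) [Field F] :
    ((F × F) × (F × F)) ≃ Matrix (Fin 2) (Fin 2) F where
  toFun p := !![p.1.1, p.1.2; p.2.1, p.2.2]
  invFun M := ((M 0 0, M 0 1), (M 1 0, M 1 1))
  left_inv := by rintro ⟨⟨a, b⟩, ⟨c, e⟩⟩; simp
  right_inv := fun M => (Matrix.eta_fin_two M).symm

private lemma S_eq (F : Type) [Field F] [Fintype F] [DecidableEq F]
    (ψ₁ : AddChar F ℂ) (hp : ψ₁.IsPrimitive) :
    ∑ C : Matrix (Fin 2) (Fin 2) F, ψ₁ (C 0 0 + (C * C) 0 0)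
      = (Fintype.card F : ℂ) ^ 2 * ∑ a : F, ψ₁ (a + a * a) := by
  rw [← Equiv.sum_comp (matEquiv F)]
  have entry : ∀ p : (F × F) × (F × F),
      (matEquiv F p) 0 0 + ((matEquiv F p) * (matEquiv F p)) 0 0
        = (p.1.1 + p.1.1 * p.1.1) + p.1.2 * p.2.1 := by
    rintro ⟨⟨a, b⟩, ⟨c, e⟩⟩
    show (!![a, b; c, e]) 0 0 + ((!![a, b; c, e]) * (!![a, b; c, e])) 0 0 = _
    rw [Matrix.mul_fin_two]
    simp [add_assoc]
  have split : ∀ a bc : F, ψ₁ ((a + a * a) + bc) = ψ₁ (a + a * a) * ψ₁ bc :=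
    fun a bc => AddChar.map_add_eq_mul ψ₁ _ _
  simp_rw [entry, split]
  rw [Fintype.sum_prod_type, Fintype.sum_prod_type]
  simp_rw [Fintype.sum_prod_type]
  calc ∑ a : F, ∑ b : F, ∑ c : F, ∑ _e : F, ψ₁ (a + a * a) * ψ₁ (b * c)
      = ∑ a : F, ψ₁ (a + a * a) * (∑ b : F, ∑ c : F, ψ₁ (c * b) * (Fintype.card F : ℂ)) := by
        refine Finset.sum_congr rfl fun a _ => ?_
        rw [Finset.mul_sum]
        refine Finset.sum_congr rfl fun b _ => ?_
        rw [Finset.mul_sum]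
        refine Finset.sum_congr rfl fun c _ => ?_
        rw [Finset.sum_const, Fintype.card, nsmul_eq_mul, mul_comm b c]
        ring
    _ = ∑ a : F, ψ₁ (a + a * a) * ((Fintype.card F : ℂ) ^ 2) := by
        have this1 : ∀ b : F, (∑ c : F, ψ₁ (c * b))
            = if b = 0 then (Fintype.card F : ℂ) else 0 := fun b => by
          rw [AddChar.sum_mulShift _ hp]; split <;> simp
        refine Finset.sum_congr rfl fun a _ => ?_
        congr 1
        simp_rw [← Finset.sum_mul, this1]
        rw [Finset.sum_eq_single (0 : F)]
        · simp [pow_two]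
        · intro b _ hb; simp [hb]
        · simp
    _ = (Fintype.card F : ℂ) ^ 2 * ∑ a : F, ψ₁ (a + a * a) := by
        rw [← Finset.sum_mul, mul_comm]

private def matEquiv' (F : Type) [Field F] :
    ((F × F) × (F × F)) ≃ Matrix (Fin 2) (Fin 2) F where
  toFun p := !![p.1.1, p.1.2; p.2.1, p.2.2]
  invFun M := ((M 0 0, M 0 1), (M 1 0, M 1 1))
  left_inv := by rintro ⟨⟨a, b⟩, ⟨c, e⟩⟩; simp
  right_inv := fun M => (Matrix.eta_fin_two M).symm

private def phiHom (n : ℕ) (F : Type) [Field F] :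
    ((Fin n → Matrix (Fin 2) (Fin 2) F) × Matrix (Fin 2) (Fin 2) F) →+ F where
  toFun x := (∑ i, x.1 i 0 0) + x.2 0 0
  map_zero' := by simp
  map_add' x y := by
    simp only [Prod.fst_add, Prod.snd_add, Pi.add_apply, Matrix.add_apply,
      Finset.sum_add_distrib]
    ring

private lemma key (n : ℕ) (F : Type) [Field F] [Fintype F] [DecidableEq F]
    (hch : ringChar F ≠ 2) :
    ∃ ψ : AddChar ((Fin n → Matrix (Fin 2) (Fin 2) F) × Matrix (Fin 2) (Fin 2) F) ℂ,
      ψ ≠ 1 ∧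
      ‖∑ x ∈ Finset.univ.filter
          (fun x : (Fin n → Matrix (Fin 2) (Fin 2) F) × Matrix (Fin 2) (Fin 2) F =>
            x.2 = ∑ i, (x.1 i) ^ 2), ψ x‖
        = ((Fintype.card F : ℝ) ^ 2 * Real.sqrt (Fintype.card F)) ^ n := by
  set ψ₁ := AddChar.FiniteField.primitiveChar_to_Complex F with hψ₁def
  have hp : ψ₁.IsPrimitive := AddChar.FiniteField.primitiveChar_to_Complex_isPrimitive F
  have hψ₁ne : ψ₁ ≠ 1 := by
    have := hp (one_ne_zero (α := F))
    rwa [AddChar.mulShift_one] at this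
  refine ⟨ψ₁.compAddMonoidHom (phiHom n F), ?_, ?_⟩
  · obtain ⟨a, ha⟩ := AddChar.ne_one_iff.mp hψ₁ne
    refine AddChar.ne_one_iff.mpr ⟨(0, !![a, 0; 0, 0]), ?_⟩
    have : phiHom n F (0, !![a, 0; 0, 0]) = a := by
      simp [phiHom]
    rwa [AddChar.compAddMonoidHom_apply, this]
  · rw [sum_graph (fun X : Fin n → Matrix (Fin 2) (Fin 2) F => ∑ i, (X i) ^ 2)
      (fun x => (ψ₁.compAddMonoidHom (phiHom n F)) x)]
    have term : ∀ X : Fin n → Matrix (Fin 2) (Fin 2) F,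
        (ψ₁.compAddMonoidHom (phiHom n F)) (X, ∑ i, (X i) ^ 2)
          = ∏ i, ψ₁ (X i 0 0 + (X i * X i) 0 0) := by
      intro X
      rw [AddChar.compAddMonoidHom_apply]
      have : phiHom n F (X, ∑ i, (X i) ^ 2)
          = ∑ i, (X i 0 0 + (X i * X i) 0 0) := by
        simp only [phiHom, AddMonoidHom.coe_mk, ZeroHom.coe_mk, Matrix.sum_apply,
          Finset.sum_add_distrib, pow_two]
      rw [this, ac_map_sum]
    simp_rw [term]
    rw [← Fintype.sum_pow (fun C : Matrix (Fin 2) (Fin 2) F => ψ₁ (C 0 0 + (C * C) 0 0)) n]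
    rw [norm_pow, S_eq F ψ₁ hp, norm_mul, norm_pow, Complex.norm_natCast,
      T_norm F hch ψ₁ hp]

/-- Over `R = M₂(F)` (`F` a finite field of odd characteristic), the paraboloid
`V_{p,0} = {(X₁,…,X_d) : X_d = X₁² + ⋯ + X_{d-1}²} ⊆ R^d` admits a nontrivial additive
character `ψ` with `(|R|^d/|V_{p,0}|^{1/2})·|V̂_{p,0}(ψ)| ≥ |F|^{(d-1)/2}`; consequently,
for any fixed `C`, `V_{p,0}` is `C`-Salem over `M₂(F)` for only finitely many (i.e.
boundedly-sized) finite fields `F` of odd characteristic. -/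
theorem stmt18 (d : ℕ) (hd : 2 ≤ d) :
    (∀ (F : Type) [Field F] [Fintype F] [DecidableEq F], ringChar F ≠ 2 →
      ∃ ψ : AddChar ((Fin (d - 1) → Matrix (Fin 2) (Fin 2) F) × Matrix (Fin 2) (Fin 2) F) ℂ,
        ψ ≠ 1 ∧
        ((Fintype.card (Matrix (Fin 2) (Fin 2) F) : ℝ) ^ d /
            ((Finset.univ.filter
              (fun x : (Fin (d - 1) → Matrix (Fin 2) (Fin 2) F) × Matrix (Fin 2) (Fin 2) F =>
                x.2 = ∑ i, (x.1 i) ^ 2)).card : ℝ) ^ ((1 : ℝ) / 2)) *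
          ‖((Fintype.card (Matrix (Fin 2) (Fin 2) F) : ℂ) ^ d)⁻¹ *
            ∑ x ∈ Finset.univ.filter
              (fun x : (Fin (d - 1) → Matrix (Fin 2) (Fin 2) F) × Matrix (Fin 2) (Fin 2) F =>
                x.2 = ∑ i, (x.1 i) ^ 2), ψ x‖
          ≥ (Fintype.card F : ℝ) ^ (((d : ℝ) - 1) / 2))
    ∧ ∀ C : ℝ, ∃ N : ℕ, ∀ (F : Type) [Field F] [Fintype F] [DecidableEq F],
        ringChar F ≠ 2 →
        (∀ ψ : AddChar
            ((Fin (d - 1) → Matrix (Fin 2) (Fin 2) F) × Matrix (Fin 2) (Fin 2) F) ℂ,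
          ψ ≠ 1 →
          ‖∑ x ∈ Finset.univ.filter
              (fun x : (Fin (d - 1) → Matrix (Fin 2) (Fin 2) F) × Matrix (Fin 2) (Fin 2) F =>
                x.2 = ∑ i, (x.1 i) ^ 2), ψ x‖
            ≤ C * ((Finset.univ.filter
              (fun x : (Fin (d - 1) → Matrix (Fin 2) (Fin 2) F) × Matrix (Fin 2) (Fin 2) F =>
                x.2 = ∑ i, (x.1 i) ^ 2)).card : ℝ) ^ ((1 : ℝ) / 2)) →
        Fintype.card F ≤ N := by
  set n := d - 1 with hn
  have hn1 : 1 ≤ n := by omega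
  have hdn : (d : ℝ) - 1 = (n : ℝ) := by
    have : d = n + 1 := by omega
    rw [this]; push_cast; ring
  constructor
  · intro F _ _ _ hch
    obtain ⟨ψ, hne, hnorm⟩ := key n F hch
    set q := Fintype.card F with hq
    have hq2 : 2 ≤ q := Fintype.one_lt_card
    have hQ0 : (0 : ℝ) < (q : ℝ) := by positivity
    have hQ1 : (1 : ℝ) ≤ (q : ℝ) := by exact_mod_cast le_trans (by norm_num) hq2
    refine ⟨ψ, hne, ?_⟩
    have hcard : ((Finset.univ.filter
        (fun x : (Fin n → Matrix (Fin 2) (Fin 2) F) × Matrix (Fin 2) (Fin 2) F =>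
          x.2 = ∑ i, (x.1 i) ^ 2)).card) = (q ^ 4) ^ n := by
      rw [card_graph (fun X : Fin n → Matrix (Fin 2) (Fin 2) F => ∑ i, (X i) ^ 2),
        Fintype.card_pi_const, card_M]
    rw [hcard, norm_mul, norm_inv, norm_pow, Complex.norm_natCast, hnorm, card_M]
    have hB : (((q ^ 4) ^ n : ℕ) : ℝ) ^ ((1 : ℝ) / 2) = ((q : ℝ) ^ 2) ^ n := by
      push_cast
      rw [← Real.sqrt_eq_rpow]
      rw [show ((q : ℝ) ^ 4) ^ n = (((q : ℝ) ^ 2) ^ n) ^ 2 by ring]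
      exact Real.sqrt_sq (by positivity)
    rw [hB]
    push_cast
    have hA : (0 : ℝ) < ((q : ℝ) ^ 4) ^ d := by positivity
    have lhs_eq : ((q : ℝ) ^ 4) ^ d / ((q : ℝ) ^ 2) ^ n *
        ((((q : ℝ) ^ 4) ^ d)⁻¹ * ((q : ℝ) ^ 2 * Real.sqrt q) ^ n)
        = (Real.sqrt q) ^ n := by
      rw [mul_pow]
      field_simp
    rw [lhs_eq, hdn]
    have : (q : ℝ) ^ ((n : ℝ) / 2) = (Real.sqrt q) ^ n := by
      rw [show ((n : ℝ) / 2) = ((1 : ℝ) / 2) * (n : ℕ) by push_cast; ring]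
      rw [Real.rpow_mul hQ0.le, Real.rpow_natCast, ← Real.sqrt_eq_rpow]
    rw [this]
  · intro C
    refine ⟨Nat.ceil (C ^ 2), ?_⟩
    intro F _ _ _ hch hSalem
    obtain ⟨ψ, hne, hnorm⟩ := key n F hch
    set q := Fintype.card F with hq
    have hq2 : 2 ≤ q := Fintype.one_lt_card
    have hQ0 : (0 : ℝ) < (q : ℝ) := by positivity
    have hQ1 : (1 : ℝ) ≤ (q : ℝ) := by exact_mod_cast le_trans (by norm_num) hq2
    have hcard : ((Finset.univ.filter
        (fun x : (Fin n → Matrix (Fin 2) (Fin 2) F) × Matrix (Fin 2) (Fin 2) F =>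
          x.2 = ∑ i, (x.1 i) ^ 2)).card) = (q ^ 4) ^ n := by
      rw [card_graph (fun X : Fin n → Matrix (Fin 2) (Fin 2) F => ∑ i, (X i) ^ 2),
        Fintype.card_pi_const, card_M]
    have h := hSalem ψ hne
    rw [hnorm, hcard] at h
    have hB : (((q ^ 4) ^ n : ℕ) : ℝ) ^ ((1 : ℝ) / 2) = ((q : ℝ) ^ 2) ^ n := by
      push_cast
      rw [← Real.sqrt_eq_rpow]
      rw [show ((q : ℝ) ^ 4) ^ n = (((q : ℝ) ^ 2) ^ n) ^ 2 by ring]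
      exact Real.sqrt_sq (by positivity)
    rw [hB, mul_pow] at h
    have hpos : (0 : ℝ) < ((q : ℝ) ^ 2) ^ n := by positivity
    have hs : (Real.sqrt q) ^ n ≤ C := by
      rw [mul_comm (((q : ℝ) ^ 2) ^ n)] at h
      exact le_of_mul_le_mul_right h hpos
    have hsq1 : (1 : ℝ) ≤ Real.sqrt q := by
      rw [show (1 : ℝ) = Real.sqrt 1 by simp]
      exact Real.sqrt_le_sqrt hQ1
    have hsC : Real.sqrt q ≤ C :=
      le_trans (le_self_pow₀ hsq1 (by omega)) hs
    have hqC : (q : ℝ) ≤ C ^ 2 := by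
      calc (q : ℝ) = (Real.sqrt q) ^ 2 := (Real.sq_sqrt hQ0.le).symm
        _ ≤ C ^ 2 := by
            apply pow_le_pow_left₀ (Real.sqrt_nonneg _) hsC
    have : (q : ℝ) ≤ (Nat.ceil (C ^ 2) : ℝ) := hqC.trans (Nat.le_ceil _)
    exact_mod_cast this
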